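/- Let K be a compact subset of a metric space H, let {R_a : H → H ∪ {∞}}_{a ∈ A} be a family of maps indexed by a set A, continuous on their domains, and suppose each R_a depends continuously on a parameter g in a metric space G, uniformly on compact sets. Assume for a fixed g_0 ∈ G and every p ∈ K there exists a(p) ∈ A with R_{a(p)}^{g_0}(p) in the interior of K. Then there exists δ > 0 such that for every g with d(g, g_0) < δ and every p ∈ K there exists a ∈ A with R_a^g(p) ∈ int(K). -/
import Mathlib


/-- Robustness of the criterion of the recurrent compact set: if for the parameter `g₀`
every point of the compact set `K` is sent into the interior of `K` by some
renormalization operator `R a g₀`, and the operators depend jointly continuously on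
the parameter and the point, then the same holds for every parameter `δ`-close to
`g₀`, for some `δ > 0`. -/
theorem stmt2 {H G A : Type*} [MetricSpace H] [MetricSpace G]
    (K : Set H) (hK : IsCompact K)
    (R : A → G → H → H)
    (hcont : ∀ a : A, Continuous (fun p : G × H => R a p.1 p.2))
    (g₀ : G)
    (hrec : ∀ p ∈ K, ∃ a : A, R a g₀ p ∈ interior K) :
    ∃ δ > (0 : ℝ), ∀ g : G, dist g g₀ < δ → ∀ p ∈ K, ∃ a : A, R a g p ∈ interior K := by
  -- for each p ∈ K, choose a(p) and ε(p) > 0 such that the ball of radius ε(p)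
  -- around (g₀, p) is mapped by R (a p) into interior K
  have key : ∀ p ∈ K, ∃ ε > (0 : ℝ), ∃ a : A,
      ∀ g : G, dist g g₀ < ε → ∀ q : H, dist q p < ε → R a g q ∈ interior K := by
    intro p hp
    obtain ⟨a, ha⟩ := hrec p hp
    have hopen : IsOpen ((fun q : G × H => R a q.1 q.2) ⁻¹' interior K) :=
      IsOpen.preimage (hcont a) isOpen_interior
    have hmem : ((g₀, p) : G × H) ∈ (fun q : G × H => R a q.1 q.2) ⁻¹' interior K := ha
    obtain ⟨ε, hε, hball⟩ := Metric.isOpen_iff.1 hopen _ hmem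
    refine ⟨ε, hε, a, fun g hg q hq => ?_⟩
    exact hball (show ((g, q) : G × H) ∈ Metric.ball (g₀, p) ε by
      rw [Metric.mem_ball, Prod.dist_eq]; exact max_lt hg hq)
  choose! ε hε a ha using key
  -- cover K by the balls B(p, ε p)
  obtain ⟨t, htcover⟩ := hK.elim_nhds_subcover' (fun p hp => Metric.ball p (ε p))
    (fun p hp => Metric.ball_mem_nhds p (hε p hp))
  by_cases hte : t.Nonempty
  · obtain ⟨δ, hδpos, hδ⟩ :
        ∃ δ > (0 : ℝ), ∀ p : K, p ∈ t → δ ≤ ε p.1 := by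
      refine ⟨t.inf' hte (fun p => ε p.1), ?_, fun p hp => Finset.inf'_le _ hp⟩
      rw [gt_iff_lt, Finset.lt_inf'_iff]
      exact fun p hp => hε p.1 p.2
    refine ⟨δ, hδpos, fun g hg q hq => ?_⟩
    obtain ⟨p, hpt, hqp⟩ := Set.mem_iUnion₂.1 (htcover hq)
    refine ⟨a p.1 p.2, ha p.1 p.2 g (lt_of_lt_of_le hg (hδ p hpt)) q
      (Metric.mem_ball.1 hqp)⟩
  · -- t empty: K is empty
    refine ⟨1, one_pos, fun g _ q hq => ?_⟩
    exfalso
    obtain ⟨p, hpt, _⟩ := Set.mem_iUnion₂.1 (htcover hq)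
    exact hte ⟨p, hpt⟩
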